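/- Let M be a monoid and let D : M × M → ℕ∞ be a length function (axioms (L1)–(L4)) whose maximum value is a finite number l ∈ ℕ, so that D(m, m') ≤ l for all m, m' and D(m, m) = l for all m. On P = {0, 1, …, l} × M, the relation (k, m) ∼ (k', m') ⇔ (k = k' and D(m, m') ≥ k) is an equivalence relation; write [k, m] for the equivalence class of (k, m). Then the simple graph on the quotient P/∼ in which two distinct classes are adjacent if and only if they can be written as [k, m] and [k+1, m] for some 0 ≤ k < l and m ∈ M is a tree (connected and without cycles). -/

import Mathlib

/-- Chiswell construction: given a length function `D` on a monoid `M` with finite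
maximum value `l`, the relation `(k, m) ∼ (k', m') ↔ k = k' ∧ D(m, m') ≥ k` on
`{0, …, l} × M` is an equivalence relation, and the simple graph on the quotient in
which two distinct classes are adjacent iff they are of the form `[k, m]`,
`[k+1, m]` is a tree. -/
theorem stmt_7 {M : Type*} [Monoid M] (D : M → M → ℕ∞) (l : ℕ)
    (hL1 : ∀ m m' : M, D m m' = D m' m)
    (hL2 : ∀ m m' m'' : M, D m' m'' ≤ D m m)
    (hL3 : ∀ m m' m'' : M, D m' m'' ≤ D (m' * m) (m'' * m))
    (hL4 : ∀ m m' m'' : M, min (D m m') (D m' m'') ≤ D m m'')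
    (hmax : ∀ m m' : M, D m m' ≤ (l : ℕ∞))
    (hdiag : ∀ m : M, D m m = (l : ℕ∞)) :
    let rel : Fin (l + 1) × M → Fin (l + 1) × M → Prop := fun p q =>
      p.1 = q.1 ∧ ((p.1 : ℕ) : ℕ∞) ≤ D p.2 q.2
    Equivalence rel ∧
    (SimpleGraph.fromRel (fun x y : Quot rel =>
      ∃ (k : Fin l) (m : M),
        x = Quot.mk rel (k.castSucc, m) ∧ y = Quot.mk rel (k.succ, m))).IsTree := by
  intro rel
  -- rel is an equivalence relation
  have hequiv : Equivalence rel := by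
    constructor
    · intro p
      refine ⟨rfl, ?_⟩
      rw [hdiag]
      exact_mod_cast Nat.le_of_lt_succ p.1.isLt
    · rintro p q ⟨h1, h2⟩
      refine ⟨h1.symm, ?_⟩
      rw [← h1, hL1 q.2 p.2]
      exact h2
    · rintro p q r ⟨h1, h2⟩ ⟨h3, h4⟩
      refine ⟨h1.trans h3, ?_⟩
      refine le_trans (le_min h2 ?_) (hL4 p.2 q.2 r.2)
      rw [h1]; exact h4
  refine ⟨hequiv, ?_⟩
  set f : Quot rel → Quot rel → Prop := fun x y =>
    ∃ (k : Fin l) (m : M),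
      x = Quot.mk rel (k.castSucc, m) ∧ y = Quot.mk rel (k.succ, m) with hf
  set G := SimpleGraph.fromRel f with hG
  -- basic facts
  have mk_eq : ∀ p q : Fin (l + 1) × M,
      Quot.mk rel p = Quot.mk rel q ↔ rel p q := by
    intro p q
    exact ⟨fun h => hequiv.eqvGen_iff.mp (Quot.eqvGen_exact h), Quot.sound⟩
  -- the height function
  let ht : Quot rel → ℕ := Quot.lift (fun p => (p.1 : ℕ))
    (fun p q h => by show ((p.1 : ℕ)) = (q.1 : ℕ); rw [h.1])
  have ht_mk : ∀ p : Fin (l + 1) × M, ht (Quot.mk rel p) = (p.1 : ℕ) :=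
    fun p => rfl
  -- adjacency dichotomy
  have key : ∀ x y, G.Adj x y → ∃ (k : Fin l) (m : M),
      (x = Quot.mk rel (k.castSucc, m) ∧ y = Quot.mk rel (k.succ, m)) ∨
      (y = Quot.mk rel (k.castSucc, m) ∧ x = Quot.mk rel (k.succ, m)) := by
    intro x y hxy
    rw [hG, SimpleGraph.fromRel_adj] at hxy
    rcases hxy.2 with ⟨k, m, h1, h2⟩ | ⟨k, m, h1, h2⟩
    · exact ⟨k, m, Or.inl ⟨h1, h2⟩⟩
    · exact ⟨k, m, Or.inr ⟨h1, h2⟩⟩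
  -- each vertex has at most one neighbor of smaller height
  have low_unique : ∀ x y z, G.Adj x y → G.Adj x z →
      ht y + 1 = ht x → ht z + 1 = ht x → y = z := by
    intro x y z hxy hxz hy hz
    obtain ⟨k, m, hk⟩ := key x y hxy
    rcases hk with ⟨hx1, hy1⟩ | ⟨hy1, hx1⟩
    · rw [hx1, ht_mk] at hy; rw [hy1, ht_mk] at hy
      simp only [Fin.val_succ, Fin.coe_castSucc] at hy; omega
    obtain ⟨k', m', hk'⟩ := key x z hxz
    rcases hk' with ⟨hx2, hz1⟩ | ⟨hz1, hx2⟩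
    · rw [hx2, ht_mk] at hz; rw [hz1, ht_mk] at hz
      simp only [Fin.val_succ, Fin.coe_castSucc] at hz; omega
    -- x = [k+1, m] = [k'+1, m']
    have hrel : rel (k.succ, m) (k'.succ, m') := by
      rw [← mk_eq, ← hx1, hx2]
    have hkk' : k = k' := by
      have h1 : k.succ = k'.succ := hrel.1
      exact Fin.succ_injective _ h1
    subst hkk'
    have hD : ((k : ℕ) : ℕ∞) ≤ D m m' := by
      refine le_trans ?_ hrel.2
      simp [Fin.val_succ]
    rw [hy1, hz1, mk_eq]
    exact ⟨rfl, by simpa using hD⟩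
  -- heights of adjacent vertices differ by one, lower one determined
  have adj_ht : ∀ x y, G.Adj x y → ht y ≤ ht x → ht y + 1 = ht x := by
    intro x y hxy hle
    obtain ⟨k, m, hk⟩ := key x y hxy
    rcases hk with ⟨hx1, hy1⟩ | ⟨hy1, hx1⟩
    · rw [hx1, ht_mk] at hle ⊢; rw [hy1, ht_mk] at hle ⊢
      simp only [Fin.val_succ, Fin.coe_castSucc] at hle ⊢; omega
    · rw [hx1, ht_mk]; rw [hy1, ht_mk]
      simp only [Fin.val_succ, Fin.coe_castSucc]
  -- the root
  have hroot0 : (0 : ℕ) < l + 1 := Nat.succ_pos l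
  set root : Quot rel := Quot.mk rel (⟨0, hroot0⟩, 1) with hroot
  -- connectivity: every class is reachable from the root
  have reach : ∀ (n : ℕ) (hn : n ≤ l) (m : M),
      G.Reachable (Quot.mk rel (⟨n, by omega⟩, m)) root := by
    intro n
    induction n with
    | zero =>
      intro hn m
      have : Quot.mk rel (⟨0, by omega⟩, m) = root := by
        rw [hroot, mk_eq]
        exact ⟨rfl, by simp⟩
      rw [this]
    | succ n ih =>
      intro hn m
      have hadj : G.Adj (Quot.mk rel (⟨n + 1, by omega⟩, m))
          (Quot.mk rel (⟨n, by omega⟩, m)) := by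
        rw [hG, SimpleGraph.fromRel_adj]
        constructor
        · intro h
          rw [mk_eq] at h
          have := h.1
          simp [Fin.ext_iff] at this
        · right
          exact ⟨⟨n, by omega⟩, m, rfl, rfl⟩
      exact (hadj.reachable).trans (ih (by omega) m)
  have hconn : G.Connected := by
    rw [SimpleGraph.connected_iff]
    refine ⟨?_, ⟨root⟩⟩
    intro x y
    induction x using Quot.ind with | mk p =>
    induction y using Quot.ind with | mk q =>
    have h1 := reach p.1 (Nat.le_of_lt_succ p.1.isLt) p.2
    have h2 := reach q.1 (Nat.le_of_lt_succ q.1.isLt) q.2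
    simp only [Fin.eta] at h1 h2
    exact h1.trans h2.symm
  -- acyclicity
  have hacyclic : G.IsAcyclic := by
    intro v c hc
    letI : DecidableEq (Quot rel) := Classical.decEq _
    -- pick a vertex of maximal height on the cycle
    obtain ⟨u, hu⟩ : ∃ u, u ∈ List.argmax ht c.support := by
      cases h : List.argmax ht c.support with
      | none =>
        exfalso
        rw [List.argmax_eq_none] at h
        exact (c.support_ne_nil) h
      | some u => exact ⟨u, by simp [Option.mem_def, h]⟩
    have hu_mem : u ∈ c.support := List.argmax_mem hu
    have humax : ∀ a ∈ c.support, ht a ≤ ht u :=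
      fun a ha => List.le_of_mem_argmax ha hu
    set c' : G.Walk u u := c.rotate u hu_mem with hc'def
    have hc' : c'.IsCycle := hc.rotate hu_mem
    have hsub : ∀ w ∈ c'.support, ht w ≤ ht u := by
      intro w hw
      rw [c'.support_eq_cons] at hw
      rcases List.mem_cons.mp hw with h | h
      · exact h ▸ le_rfl
      · have := (SimpleGraph.Walk.support_rotate c u hu_mem).mem_iff.mp h
        exact humax w (List.mem_of_mem_tail this)
    -- decompose the cycle as a cons
    obtain ⟨a, hadj, p, hcons⟩ := SimpleGraph.Walk.not_nil_iff.mp hc'.not_nil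
    -- decompose it as a concat as well
    obtain ⟨x, q, hadj', hconcat⟩ := SimpleGraph.Walk.exists_cons_eq_concat hadj p
    -- heights of a and x
    have ha_mem : a ∈ c'.support := by
      rw [hcons]
      simp [SimpleGraph.Walk.support_cons]
    have hx_mem : x ∈ c'.support := by
      rw [hcons, hconcat, SimpleGraph.Walk.concat_eq_append]
      rw [SimpleGraph.Walk.mem_support_append_iff]
      left
      exact SimpleGraph.Walk.end_mem_support q
    have ha1 : ht a + 1 = ht u := adj_ht u a hadj (hsub a ha_mem)
    have hx1 : ht x + 1 = ht u := adj_ht u x hadj'.symm (hsub x hx_mem)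
    have hxa : x = a := low_unique u x a hadj'.symm hadj hx1 ha1
    subst hxa
    -- now the first and last edges of the cycle coincide
    have hedges : c'.edges = s(u, x) :: p.edges := by
      rw [hcons, SimpleGraph.Walk.edges_cons]
    have hedges' : c'.edges = q.edges ++ [s(x, u)] := by
      rw [hcons, hconcat, SimpleGraph.Walk.edges_concat, List.concat_eq_append]
    have hlen : 3 ≤ c'.edges.length := by
      rw [SimpleGraph.Walk.length_edges]
      exact hc'.three_le_length
    have hqne : q.edges ≠ [] := by
      intro h
      rw [hedges', h] at hlen
      simp at hlen
    obtain ⟨b, t, hbt⟩ := List.exists_cons_of_ne_nil hqne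
    have heq : s(u, x) :: p.edges = (b :: t) ++ [s(x, u)] := by
      rw [← hbt, ← hedges', hedges]
    rw [List.cons_append] at heq
    obtain ⟨hb, hpt⟩ := List.cons_eq_cons.mp heq
    have hmem : s(u, x) ∈ p.edges := by
      rw [hpt]
      simp [Sym2.eq_swap]
    have hnodup := hc'.edges_nodup
    rw [hedges, List.nodup_cons] at hnodup
    exact hnodup.1 hmem
  exact ⟨hconn, hacyclic⟩
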